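/- Any critical point R of G(R) = (1/m) Σ_i √(δ_TSL(R,R_i)) with R ≠ R_i for all i satisfies R = (Σ_j w_j)⁻¹ Σ_i w_i R_i where w_i = 1/(√(δ_TSL(R,R_i)) √(1+‖R_i‖²)); i.e., the TSL median is a weighted average of the data with these weights. -/

import Mathlib

open Matrix ComplexOrder

noncomputable def fnorm {N : ℕ} (A : Matrix (Fin N) (Fin N) ℂ) : ℝ :=
  Real.sqrt ((Aᴴ * A).trace.re)

noncomputable def rinner {N : ℕ} (A B : Matrix (Fin N) (Fin N) ℂ) : ℝ :=
  ((Aᴴ * B).trace).re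

noncomputable def deltaTSL {N : ℕ} (Y Z : Matrix (Fin N) (Fin N) ℂ) : ℝ :=
  fnorm (Y - Z) ^ 2 / (2 * Real.sqrt (1 + fnorm Z ^ 2))

-- Principal matrix logarithm: the logarithm whose spectrum lies in the
-- horizontal strip `{z | -π < Im z < π}` (0 if no such logarithm exists).
open Classical in
noncomputable def mLog {N : ℕ} (A : Matrix (Fin N) (Fin N) ℂ) : Matrix (Fin N) (Fin N) ℂ :=
  if h : ∃ L : Matrix (Fin N) (Fin N) ℂ, NormedSpace.exp L = A ∧
      ∀ μ ∈ spectrum ℂ L, μ.im ∈ Set.Ioo (-Real.pi) Real.pi then h.choose else 0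

-- The positive-semidefinite square root (0 for non-PSD matrices).
open Classical in
noncomputable def msqrt {N : ℕ} (A : Matrix (Fin N) (Fin N) ℂ) : Matrix (Fin N) (Fin N) ℂ :=
  if h : A.PosSemidef then (h.1.eigenvectorUnitary : Matrix (Fin N) (Fin N) ℂ) *
    diagonal ((↑) ∘ Real.sqrt ∘ h.1.eigenvalues) *
    (star (h.1.eigenvectorUnitary : Matrix (Fin N) (Fin N) ℂ)) else 0

lemma trace_re_eq {N : ℕ} (A : Matrix (Fin N) (Fin N) ℂ) :
    ((Aᴴ * A).trace).re = ∑ i, ∑ j, Complex.normSq (A j i) := by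
  simp [Matrix.trace, Matrix.mul_apply, Matrix.conjTranspose_apply, Complex.normSq,
    Complex.re_sum, mul_comm]

lemma trace_re_nonneg {N : ℕ} (A : Matrix (Fin N) (Fin N) ℂ) :
    0 ≤ ((Aᴴ * A).trace).re := by
  rw [trace_re_eq]
  exact Finset.sum_nonneg fun i _ => Finset.sum_nonneg fun j _ => Complex.normSq_nonneg _

lemma fnorm_sq {N : ℕ} (A : Matrix (Fin N) (Fin N) ℂ) :
    fnorm A ^ 2 = ((Aᴴ * A).trace).re := Real.sq_sqrt (trace_re_nonneg A)

lemma trace_re_pos {N : ℕ} (A : Matrix (Fin N) (Fin N) ℂ) (h : A ≠ 0) :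
    0 < ((Aᴴ * A).trace).re := by
  rcases (trace_re_nonneg A).lt_or_eq with h' | h'
  · exact h'
  · exfalso; apply h
    ext i j
    have hz := h'.symm
    rw [trace_re_eq] at hz
    have h2 := Finset.sum_eq_zero_iff_of_nonneg
      (fun i (_ : i ∈ Finset.univ) => Finset.sum_nonneg fun j _ => Complex.normSq_nonneg (A j i)) |>.mp hz j
      (Finset.mem_univ j)
    have h3 := (Finset.sum_eq_zero_iff_of_nonneg (fun j _ => Complex.normSq_nonneg _)).mp h2 i
      (Finset.mem_univ i)
    simpa [Complex.normSq_eq_zero] using h3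

lemma expand {N : ℕ} (D H : Matrix (Fin N) (Fin N) ℂ) (ε : ℝ) :
    (((D + ε • H)ᴴ * (D + ε • H)).trace).re =
      ((Dᴴ * D).trace).re + 2 * ((Dᴴ * H).trace).re * ε + ((Hᴴ * H).trace).re * ε ^ 2 := by
  have hsmul : (ε • H) = (ε : ℂ) • H := by
    ext i j; simp [Complex.real_smul]
  rw [hsmul]
  have hHD : ((Hᴴ * D).trace).re = ((Dᴴ * H).trace).re := by
    have : (Hᴴ * D) = (Dᴴ * H)ᴴ := by simp
    rw [this, Matrix.trace_conjTranspose]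
    simp
  simp [conjTranspose_add, conjTranspose_smul, add_mul, mul_add, trace_add, trace_smul,
    smul_mul_assoc, mul_smul_comm, smul_smul, Complex.add_re, Complex.smul_re, hHD]
  ring

-- the key derivative lemma
lemma deriv_sqrt_delta {N : ℕ} (X Z H : Matrix (Fin N) (Fin N) ℂ) (hXZ : X ≠ Z) :
    HasDerivAt (fun ε : ℝ => Real.sqrt (deltaTSL (X + ε • H) Z))
      ((((X - Z)ᴴ * H).trace).re *
        (1 / (Real.sqrt (2 * Real.sqrt (1 + fnorm Z ^ 2)) * Real.sqrt ((((X - Z)ᴴ * (X - Z)).trace).re))))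
      0 := by
  set D := X - Z with hD
  set a := (((D)ᴴ * D).trace).re with ha
  set b := (((D)ᴴ * H).trace).re with hb
  set c := (((H)ᴴ * H).trace).re with hc
  set k := 2 * Real.sqrt (1 + fnorm Z ^ 2) with hk
  have ha_pos : 0 < a := trace_re_pos D (sub_ne_zero.mpr hXZ)
  have hk_pos : 0 < k := by
    have : (0:ℝ) < Real.sqrt (1 + fnorm Z ^ 2) := Real.sqrt_pos.mpr (by positivity)
    linarith
  have hfun : ∀ ε : ℝ, deltaTSL (X + ε • H) Z = (a + 2 * b * ε + c * ε ^ 2) / k := by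
    intro ε
    have h1 : X + ε • H - Z = D + ε • H := by rw [hD]; abel
    rw [deltaTSL, h1, fnorm_sq, expand, hk]
  have h1 : HasDerivAt (fun ε : ℝ => a + 2 * b * ε + c * ε ^ 2) (2 * b) 0 := by
    have h2 := ((hasDerivAt_id (0:ℝ)).const_mul (2*b)).const_add a
    have h3 := h2.fun_add ((hasDerivAt_pow 2 (0:ℝ)).const_mul c)
    simpa using h3
  have h4 := (h1.div_const k).sqrt (by
    show (a + 2 * b * 0 + c * 0 ^ 2) / k ≠ 0
    have e0 : a + 2 * b * 0 + c * 0 ^ 2 = a := by ring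
    rw [e0]
    positivity)
  have h5 : (fun ε : ℝ => Real.sqrt ((a + 2 * b * ε + c * ε ^ 2) / k)) =
      fun ε : ℝ => Real.sqrt (deltaTSL (X + ε • H) Z) := by
    funext ε; rw [hfun]
  rw [h5] at h4
  have e0 : a + 2 * b * 0 + c * 0 ^ 2 = a := by ring
  rw [e0, Real.sqrt_div ha_pos.le] at h4
  convert h4 using 1
  have hsa : Real.sqrt a ≠ 0 := by positivity
  have hsk' : Real.sqrt k ≠ 0 := by positivity
  have hkk : Real.sqrt k * Real.sqrt k = k := Real.mul_self_sqrt hk_pos.le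
  field_simp
  linear_combination (-b) * hkk

open ComplexOrder in
/-- a critical point of the TSL-median objective
`G(R) = (1/m) Σ_i √(δ_TSL(R,R_i))` (criticality expressed through vanishing directional
derivatives along all Hermitian directions) with `R ≠ R_i` for all `i` is the weighted
average of the data with weights `w_i = 1/(√(δ_TSL(R,R_i)) √(1+‖R_i‖²))`. -/
theorem tslMedian_critical_point_eq_weighted_average {N m : ℕ} (hm : 0 < m)
    (R : Fin m → Matrix (Fin N) (Fin N) ℂ) (hR : ∀ i, (R i).PosDef)
    (X : Matrix (Fin N) (Fin N) ℂ) (hX : X.IsHermitian)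
    (hne : ∀ i, X ≠ R i)
    (hcrit : ∀ H : Matrix (Fin N) (Fin N) ℂ, H.IsHermitian →
      HasDerivAt (fun ε : ℝ =>
        (1 / (m : ℝ)) * ∑ i, Real.sqrt (deltaTSL (X + ε • H) (R i))) 0 0) :
    X = (∑ j, (1 / (Real.sqrt (deltaTSL X (R j)) * Real.sqrt (1 + fnorm (R j) ^ 2))))⁻¹ •
        ∑ i, (1 / (Real.sqrt (deltaTSL X (R i)) * Real.sqrt (1 + fnorm (R i) ^ 2))) • R i := by
  classical
  set D : Fin m → Matrix (Fin N) (Fin N) ℂ := fun i => X - R i with hDdef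
  set a : Fin m → ℝ := fun i => (((D i)ᴴ * (D i)).trace).re with hadef
  set k : Fin m → ℝ := fun i => 2 * Real.sqrt (1 + fnorm (R i) ^ 2) with hkdef
  set v : Fin m → ℝ := fun i => 1 / (Real.sqrt (k i) * Real.sqrt (a i)) with hvdef
  have ha_pos : ∀ i, 0 < a i := fun i => trace_re_pos (D i) (sub_ne_zero.mpr (hne i))
  have hk_pos : ∀ i, 0 < k i := by
    intro i
    have : (0:ℝ) < Real.sqrt (1 + fnorm (R i) ^ 2) := Real.sqrt_pos.mpr (by positivity)
    simp only [hkdef]; linarith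
  have hv_pos : ∀ i, 0 < v i := by
    intro i
    have h1 := ha_pos i; have h2 := hk_pos i
    simp only [hvdef]
    positivity
  -- Step 1: criticality gives vanishing weighted inner products
  have step1 : ∀ H : Matrix (Fin N) (Fin N) ℂ, H.IsHermitian →
      ∑ i, v i * (((D i)ᴴ * H).trace).re = 0 := by
    intro H hH
    have hd : HasDerivAt (fun ε : ℝ =>
        (1 / (m : ℝ)) * ∑ i, Real.sqrt (deltaTSL (X + ε • H) (R i)))
        ((1 / (m : ℝ)) * ∑ i, (((D i)ᴴ * H).trace).re *
          (1 / (Real.sqrt (k i) * Real.sqrt (a i)))) 0 := by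
      exact (HasDerivAt.fun_sum fun i _ => deriv_sqrt_delta X (R i) H (hne i)).const_mul _
    have h0 := hd.unique (hcrit H hH)
    have hm' : (1 / (m:ℝ)) ≠ 0 := by positivity
    have h1 : ∑ i, (((D i)ᴴ * H).trace).re * (1 / (Real.sqrt (k i) * Real.sqrt (a i))) = 0 :=
      (mul_eq_zero.mp h0).resolve_left hm'
    rw [← h1]
    exact Finset.sum_congr rfl fun i _ => by rw [hvdef]; ring
  -- Step 2: the weighted sum of residuals vanishes
  set S : Matrix (Fin N) (Fin N) ℂ := ∑ i, v i • D i with hSdef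
  have hDherm : ∀ i, (D i).IsHermitian := fun i => hX.sub (hR i).isHermitian
  have hSherm : S.IsHermitian := by
    show Sᴴ = S
    simp only [hSdef, conjTranspose_sum, conjTranspose_smul, star_trivial]
    exact Finset.sum_congr rfl fun i _ => by rw [(hDherm i).eq]
  have htr : ∀ H : Matrix (Fin N) (Fin N) ℂ,
      ((Sᴴ * H).trace).re = ∑ i, v i * (((D i)ᴴ * H).trace).re := by
    intro H
    simp only [hSdef, conjTranspose_sum, conjTranspose_smul, Finset.sum_mul, smul_mul_assoc,
      trace_sum, trace_smul, Complex.re_sum]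
    exact Finset.sum_congr rfl fun i _ => by
      simp [Complex.smul_re]
  have hS0 : S = 0 := by
    by_contra hS
    have := trace_re_pos S hS
    rw [htr S, step1 S hSherm] at this
    exact lt_irrefl 0 this
  -- Step 3: rearrange
  have step3 : (∑ i, v i) • X = ∑ i, v i • R i := by
    have : ∑ i, v i • D i = (∑ i, v i) • X - ∑ i, v i • R i := by
      rw [Finset.sum_smul, ← Finset.sum_sub_distrib]
      exact Finset.sum_congr rfl fun i _ => by rw [hDdef]; exact smul_sub _ _ _
    rw [hSdef, this] at hS0
    exact sub_eq_zero.mp hS0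
  -- Step 4: solve for X
  have hW_pos : 0 < ∑ i, v i := Finset.sum_pos (fun i _ => hv_pos i) ⟨⟨0, hm⟩, Finset.mem_univ _⟩
  have step4 : X = (∑ i, v i)⁻¹ • ∑ i, v i • R i := by
    rw [← step3, smul_smul, inv_mul_cancel₀ hW_pos.ne', one_smul]
  -- Step 5: identify the statement's weights with 2 * v i
  have hwv : ∀ i, (1 / (Real.sqrt (deltaTSL X (R i)) * Real.sqrt (1 + fnorm (R i) ^ 2)))
      = 2 * v i := by
    intro i
    have hdel : deltaTSL X (R i) = a i / k i := by
      rw [deltaTSL, fnorm_sq]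
    have hs_pos : (0:ℝ) < Real.sqrt (1 + fnorm (R i) ^ 2) := Real.sqrt_pos.mpr (by positivity)
    have hkk : Real.sqrt (k i) * Real.sqrt (k i) = k i := Real.mul_self_sqrt (hk_pos i).le
    have hk_eq : k i = 2 * Real.sqrt (1 + fnorm (R i) ^ 2) := rfl
    rw [hdel, Real.sqrt_div (ha_pos i).le, hvdef]
    have hsa : (0:ℝ) < Real.sqrt (a i) := Real.sqrt_pos.mpr (ha_pos i)
    have hsk : (0:ℝ) < Real.sqrt (k i) := Real.sqrt_pos.mpr (hk_pos i)
    field_simp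
    linear_combination hkk
  simp_rw [hwv]
  have h2sum : ∑ j, 2 * v j = 2 * ∑ j, v j := by rw [Finset.mul_sum]
  have h2smul : ∑ i, (2 * v i) • R i = (2:ℝ) • ∑ i, v i • R i := by
    rw [Finset.smul_sum]
    exact Finset.sum_congr rfl fun i _ => by rw [smul_smul]
  have hc : ((2:ℝ) * ∑ j, v j)⁻¹ * 2 = (∑ j, v j)⁻¹ := by
    rw [mul_inv]; field_simp
  rw [h2sum, h2smul, smul_smul, hc]
  exact step4
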